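/- Let σ_1, ..., σ_n be (signed) Pauli operators on n qubits, where σ_i = (-1)^{u_i} i^{v_i} X(R^i) Z(T^i) with u_i, v_i ∈ Z_2 and R^i, T^i ∈ (Z_2)^n. For a ∈ (Z_2)^n define σ(a) = ∏_i σ_i^{a_i}. Then there exists a quadratic function q : (Z_2)^n → Z_2 such that σ(a)|0⟩^⊗n = (-1)^{q(a)} (∏_i i^{a_i v_i}) |Ra⟩, where R is the n×n matrix over Z_2 whose i-th column is R^i. -/

import Mathlib

/-- `X(x)` as a matrix indexed by bit strings. -/
def PauliX {n : ℕ} (x : Fin n → ZMod 2) :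
    Matrix (Fin n → ZMod 2) (Fin n → ZMod 2) ℂ :=
  Matrix.of fun y z => if y = z + x then 1 else 0

/-- `Z(z)` as a diagonal matrix with entries `(-1)^{z·y}`. -/
def PauliZ {n : ℕ} (z : Fin n → ZMod 2) :
    Matrix (Fin n → ZMod 2) (Fin n → ZMod 2) ℂ :=
  Matrix.diagonal fun y => (-1 : ℂ) ^ (∑ i, z i * y i).val

/-- The computational basis state `|x⟩`. -/
def ket {n : ℕ} (x : Fin n → ZMod 2) : (Fin n → ZMod 2) → ℂ :=
  fun y => if y = x then 1 else 0

/-- A quadratic function on `(Z_2)^n`. -/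
def IsQuadratic {n : ℕ} (q : (Fin n → ZMod 2) → ZMod 2) : Prop :=
  ∃ (c : Fin n → Fin n → ZMod 2) (d : Fin n → ZMod 2),
    ∀ x, q x = (∑ i, ∑ j, c i j * x i * x j) + ∑ i, d i * x i

lemma negpow_add (a b : ZMod 2) :
    ((-1:ℂ))^((a+b).val) = (-1)^a.val * (-1)^b.val := by
  have h : ∀ x : ZMod 2, ((-1:ℂ))^x.val = if x = 0 then 1 else -1 := by
    intro x
    rcases (by decide : ∀ x : ZMod 2, x = 0 ∨ x = 1) x with rfl | rfl
    · norm_num [show ((0:ZMod 2)).val = 0 from rfl]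
    · norm_num [show ((1:ZMod 2)).val = 1 from rfl]
  rw [h, h, h]
  rcases (by decide : ∀ x : ZMod 2, x = 0 ∨ x = 1) a with rfl | rfl <;>
    rcases (by decide : ∀ x : ZMod 2, x = 0 ∨ x = 1) b with rfl | rfl <;>
    simp [show (1:ZMod 2) + 1 = 0 from rfl, show ¬ (1:ZMod 2) = 0 by decide]

lemma pauliZ_mulVec {n : ℕ} (z w : Fin n → ZMod 2) :
    (PauliZ z).mulVec (ket w) = ((-1:ℂ) ^ (∑ i, z i * w i).val) • ket w := by
  funext y
  rw [PauliZ, Matrix.mulVec_diagonal]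
  by_cases h : y = w
  · subst h; simp [ket]
  · simp [ket, h]

lemma pauliX_mulVec {n : ℕ} (x w : Fin n → ZMod 2) :
    (PauliX x).mulVec (ket w) = ket (w + x) := by
  funext y
  simp only [Matrix.mulVec, dotProduct, PauliX, Matrix.of_apply, ket]
  rw [Finset.sum_eq_single w (fun b _ hb => by simp [hb]) (by simp)]
  simp

/-- For signed Pauli operators `σ_i = (-1)^{u_i} i^{v_i} X(Rⁱ) Z(Tⁱ)` and
`σ(a) = ∏_i σ_i^{a_i}` (product in order of increasing `i`), there is a quadratic
`q` with `σ(a)|0⟩^{⊗n} = (-1)^{q(a)} (∏_i i^{a_i v_i}) |Ra⟩`, where the `i`-th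
column of `R` is `Rⁱ`. -/
theorem pauli_product_on_zero (n : ℕ)
    (u v : Fin n → ZMod 2) (Rc Tc : Fin n → Fin n → ZMod 2)
    (σ : Fin n → Matrix (Fin n → ZMod 2) (Fin n → ZMod 2) ℂ)
    (hσ : ∀ i, σ i = ((-1 : ℂ) ^ (u i).val * Complex.I ^ (v i).val) •
      (PauliX (Rc i) * PauliZ (Tc i)))
    (R : Matrix (Fin n) (Fin n) (ZMod 2))
    (hRcol : ∀ r i, R r i = Rc i r) :
    ∃ q : (Fin n → ZMod 2) → ZMod 2, IsQuadratic q ∧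
      ∀ a : Fin n → ZMod 2,
        (List.ofFn fun i => σ i ^ (a i).val).prod.mulVec (ket fun _ => 0) =
          ((-1 : ℂ) ^ (q a).val * ∏ i, Complex.I ^ (a i * v i).val) •
            ket (R.mulVec a) := by
  classical
  set c : Fin n → Fin n → ZMod 2 :=
    fun i j => if i < j then ∑ r, Tc i r * Rc j r else 0 with hc
  refine ⟨fun x => (∑ i, ∑ j, c i j * x i * x j) + ∑ i, u i * x i,
    ⟨c, u, fun x => rfl⟩, ?_⟩
  intro a
  set S : ℕ → Finset (Fin n) := fun k => Finset.univ.filter fun i => k ≤ i.val with hS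
  set E : ℕ → ZMod 2 := fun k =>
    (∑ i ∈ S k, ∑ j ∈ S k, c i j * a i * a j) + ∑ i ∈ S k, u i * a i with hE
  set W : ℕ → (Fin n → ZMod 2) := fun k r => ∑ i ∈ S k, a i * Rc i r with hW
  set P : ℕ → ℂ := fun k => ∏ i ∈ S k, Complex.I ^ (a i * v i).val with hP
  have key : ∀ m k, k + m = n →
      ((List.ofFn fun i => σ i ^ (a i).val).drop k).prod.mulVec (ket fun _ => 0) =
        ((-1:ℂ) ^ (E k).val * P k) • ket (W k) := by
    intro m
    induction m with
    | zero =>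
      intro k hk
      have hSe : S k = ∅ := by
        ext i
        simp only [hS, Finset.mem_filter, Finset.mem_univ, true_and,
          Finset.notMem_empty, iff_false]
        have := i.isLt
        omega
      have hdrop : (List.ofFn fun i => σ i ^ (a i).val).drop k = [] := by
        apply List.drop_eq_nil_of_le
        simp
        omega
      rw [hdrop]
      simp only [List.prod_nil, Matrix.one_mulVec, hE, hW, hP, hSe]
      simp [ket]
    | succ m ih =>
      intro k hk
      have hkn : k < n := by omega
      have ih' := ih (k+1) (by omega)
      set i0 : Fin n := ⟨k, hkn⟩ with hi0
      have hi0S : i0 ∉ S (k+1) := by simp [hS, hi0]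
      have hSk : S k = insert i0 (S (k+1)) := by
        ext i
        simp only [hS, Finset.mem_filter, Finset.mem_univ, true_and, Finset.mem_insert,
          hi0, Fin.ext_iff]
        omega
      have hc00 : c i0 i0 = 0 := by simp [hc]
      have hci0 : ∀ i ∈ S (k+1), c i i0 = 0 := by
        intro i hi
        simp only [hS, Finset.mem_filter, Finset.mem_univ, true_and] at hi
        have : ¬ i < i0 := by
          simp only [Fin.lt_def, hi0]
          omega
        simp [hc, this]
      have hEdec : E k = u i0 * a i0 + (∑ j ∈ S (k+1), c i0 j * a i0 * a j) + E (k+1) := by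
        simp only [hE, hSk, Finset.sum_insert hi0S, hc00]
        rw [Finset.sum_congr rfl (fun i hi =>
          show c i i0 * a i * a i0 + ∑ j ∈ S (k+1), c i j * a i * a j
              = ∑ j ∈ S (k+1), c i j * a i * a j from by
            rw [hci0 i hi]; ring)]
        ring
      have hWdec : ∀ r, W k r = a i0 * Rc i0 r + W (k+1) r := by
        intro r
        simp only [hW, hSk]
        rw [Finset.sum_insert hi0S]
      have hPdec : P k = Complex.I ^ (a i0 * v i0).val * P (k+1) := by
        simp only [hP, hSk]
        rw [Finset.prod_insert hi0S]
      have hlen : k < (List.ofFn fun i => σ i ^ (a i).val).length := by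
        simpa using hkn
      rw [List.drop_eq_getElem_cons hlen, List.prod_cons, List.getElem_ofFn,
        ← Matrix.mulVec_mulVec, ih']
      rcases (by decide : ∀ x : ZMod 2, x = 0 ∨ x = 1) (a i0) with h | h
      · have hE' : E k = E (k+1) := by rw [hEdec, h]; ring_nf; simp
        have hW' : W k = W (k+1) := by funext r; rw [hWdec r, h]; ring
        have hP' : P k = P (k+1) := by rw [hPdec, h]; simp
        rw [hE', hW', hP']
        show (σ i0 ^ (a i0).val).mulVec _ = _
        rw [h]
        simp [Matrix.one_mulVec]
      · have hD : (∑ r, Tc i0 r * W (k+1) r) = ∑ j ∈ S (k+1), c i0 j * a j := by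
          have hci0j : ∀ j ∈ S (k+1), c i0 j = ∑ r, Tc i0 r * Rc j r := by
            intro j hj
            simp only [hS, Finset.mem_filter, Finset.mem_univ, true_and] at hj
            have : i0 < j := by
              simp only [Fin.lt_def, hi0]
              omega
            simp [hc, this]
          calc ∑ r, Tc i0 r * W (k+1) r
              = ∑ r, ∑ j ∈ S (k+1), Tc i0 r * (a j * Rc j r) := by
                simp only [hW, Finset.mul_sum]
            _ = ∑ j ∈ S (k+1), ∑ r, Tc i0 r * (a j * Rc j r) := Finset.sum_comm
            _ = ∑ j ∈ S (k+1), c i0 j * a j := by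
                refine Finset.sum_congr rfl fun j hj => ?_
                rw [hci0j j hj, Finset.sum_mul]
                exact Finset.sum_congr rfl fun r _ => by ring
        have hEk : E k = u i0 + ((∑ r, Tc i0 r * W (k+1) r) + E (k+1)) := by
          rw [hEdec, hD, h]
          ring
        have hPk : P k = Complex.I ^ (v i0).val * P (k+1) := by
          rw [hPdec, h, one_mul]
        have hWk : W (k+1) + Rc i0 = W k := by
          funext r
          rw [Pi.add_apply, hWdec r, h]
          ring
        show (σ i0 ^ (a i0).val).mulVec _ = _
        rw [h]
        rw [show ((1 : ZMod 2)).val = 1 from rfl, pow_one, hσ i0,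
          Matrix.mulVec_smul, Matrix.smul_mulVec, ← Matrix.mulVec_mulVec,
          pauliZ_mulVec, Matrix.mulVec_smul, pauliX_mulVec, hWk]
        simp only [smul_smul]
        congr 1
        rw [hEk, hPk]
        simp only [negpow_add]
        ring
  have h0 := key n 0 (by simp)
  rw [List.drop_zero] at h0
  rw [h0]
  have hS0 : S 0 = Finset.univ := by
    ext i; simp [hS]
  have hW0 : W 0 = R.mulVec a := by
    funext r
    simp only [hW, hS0, Matrix.mulVec, dotProduct]
    exact Finset.sum_congr rfl fun i _ => by rw [hRcol r i]; ring
  have hE0 : E 0 = (∑ i, ∑ j, c i j * a i * a j) + ∑ i, u i * a i := by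
    simp [hE, hS0]
  have hP0 : P 0 = ∏ i, Complex.I ^ (a i * v i).val := by
    simp [hP, hS0]
  rw [hW0, hE0, hP0]
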